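/- Let r ≥ 0 and k ≥ r be integers, let n ≥ 0 and f1 ≥ 0 be integers, and let t̃_1, …, t̃_n be integers with t̃_i ≥ 1 for every i. For the indices with t̃_i ≥ 2 set Ω̃_i = Ω(t̃_i,r), ã_i = a(t̃_i,r), b̃_i = b(t̃_i,r), and for the indices with t̃_i = 1 set Ω̃_i = ã_i = b̃_i = 0. Then, as integers, C(k+2,2) + f1·C(k+2−(r+1),2) − Σ_{i=1}^{n} [ t̃_i·C(k+2−(r+1),2) − b̃_i·C(k+2−Ω̃_i,2) − ã_i·C(k+2−(Ω̃_i+1),2) ] = C(k+2,2) + f1·C(k+2−(r+1),2) − n·[ C(k+2,2) − C(r+2,2) ] + Σ_{i=1}^{n} Σ_{j=1}^{k−r} max(r + j + 1 − j·t̃_i, 0). (Equivalently: the homological upper bound formula for dim C_k^r(Δ) coincides with Schumaker's upper bound formula, for any combinatorial data f1 and t̃_1,…,t̃_n with each t̃_i ≥ 1.) -/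

import Mathlib

/-- `Ω t r = ⌊t·r/(t-1)⌋ + 1`, the floor taken in `ℚ`. -/
noncomputable def Omega (t r : ℤ) : ℤ := ⌊(t * r : ℚ) / ((t : ℚ) - 1)⌋ + 1

/-- `a t r = t·(r+1) + (1−t)·Ω(t,r)`. -/
noncomputable def aa (t r : ℤ) : ℤ := t * (r + 1) + (1 - t) * Omega t r

/-- `b t r = t − 1 − a(t,r)`. -/
noncomputable def bb (t r : ℤ) : ℤ := t - 1 - aa t r

/-- `C2 m = C(m, 2)`, with the convention that it is `0` for `m < 2`
(truncation via `Int.toNat`). -/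
def C2 (m : ℤ) : ℤ := ((m.toNat).choose 2 : ℤ)

lemma C2_succ (m : ℤ) : C2 (m + 1) = C2 m + max m 0 := by
  rw [← Int.toNat_eq_max]
  unfold C2
  rcases le_or_gt 0 m with h | h
  · have : (m+1).toNat = m.toNat + 1 := by omega
    rw [this, Nat.choose_succ_succ' m.toNat 1]
    push_cast [Nat.choose_one_right]
    ring
  · have h1 : (m+1).toNat = 0 ∨ (m+1).toNat = 1 := by omega
    have h2 : m.toNat = 0 := by omega
    rcases h1 with h1 | h1 <;> simp [h1, h2]

lemma C2_eq_zero {m : ℤ} (h : m ≤ 1) : C2 m = 0 := by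
  unfold C2
  have : m.toNat < 2 := by omega
  simp [Nat.choose_eq_zero_of_lt this]

lemma floor_key (t r : ℤ) (ht : 2 ≤ t) : Omega t r = r + r / (t-1) + 1 := by
  unfold Omega
  have h3 : ((t-1).toNat : ℤ) = t - 1 := by omega
  have h1 : ((t:ℚ) - 1) = (((t-1).toNat : ℕ) : ℚ) := by
    calc ((t:ℚ)-1) = ((t-1 : ℤ) : ℚ) := by push_cast; ring
    _ = (((t-1).toNat : ℤ) : ℚ) := by rw [h3]
    _ = _ := by push_cast; ring
  have h2 : ((t * r : ℤ) : ℚ) = (t*r : ℚ) := by push_cast; ring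
  rw [h1, ← h2, Rat.floor_intCast_div_natCast]
  rw [h3]
  have : t * r = r + r * (t-1) := by ring
  rw [this, Int.add_mul_ediv_right _ _ (by omega : t - 1 ≠ 0)]
  ring

lemma sum_Icc_top {b : ℤ} (hb : 0 ≤ b) (f : ℤ → ℤ) :
    ∑ j ∈ Finset.Icc (1:ℤ) (b+1), f j
      = (∑ j ∈ Finset.Icc (1:ℤ) b, f j) + f (b+1) := by
  have h : Finset.Icc (1:ℤ) (b+1) = insert (b+1) (Finset.Icc 1 b) := by
    ext x; simp only [Finset.mem_Icc, Finset.mem_insert]; omega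
  rw [h, Finset.sum_insert (by simp only [Finset.mem_Icc]; omega)]
  ring

lemma key (r tt : ℤ) (hr : 0 ≤ r) (ht : 1 ≤ tt) (k : ℤ) (hk : r ≤ k)
    (O A B : ℤ)
    (hO : O = if tt = 1 then 0 else Omega tt r)
    (hA : A = if tt = 1 then 0 else aa tt r)
    (hB : B = if tt = 1 then 0 else bb tt r) :
    tt * C2 (k + 2 - (r + 1)) - B * C2 (k + 2 - O) - A * C2 (k + 2 - (O + 1))
    = C2 (k + 2) - C2 (r + 2)
      - ∑ j ∈ Finset.Icc (1 : ℤ) (k - r), max (r + j + 1 - j * tt) 0 := by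
  -- facts about O, A, B
  have hfacts : (tt = 1 ∧ O = 0 ∧ A = 0 ∧ B = 0) ∨
      (2 ≤ tt ∧ ∃ m : ℤ, 0 ≤ m ∧ m * (tt-1) ≤ r ∧ r < (m+1)*(tt-1) ∧
        O = r + m + 1 ∧ A = r + 1 - (tt-1)*m ∧ B = tt - 1 - A) := by
    rcases eq_or_lt_of_le ht with h1 | h1
    · left
      simp [hO, hA, hB, ← h1]
    · right
      have ht2 : 2 ≤ tt := by omega
      have hne : ¬ (tt = 1) := by omega
      refine ⟨ht2, r / (tt-1), ?_, ?_, ?_, ?_, ?_, ?_⟩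
      · exact Int.ediv_nonneg hr (by omega)
      · have h3 := Int.mul_ediv_add_emod r (tt-1)
        have h4 := Int.emod_nonneg r (show tt - 1 ≠ 0 by omega)
        nlinarith [h3, h4]
      · have h3 := Int.mul_ediv_add_emod r (tt-1)
        have h4 := Int.emod_lt_of_pos r (show (0:ℤ) < tt - 1 by omega)
        nlinarith [h3, h4]
      · rw [hO, if_neg hne, floor_key tt r ht2]
      · rw [hA, if_neg hne]
        unfold aa
        rw [floor_key tt r ht2]; ring
      · rw [hB, hA, if_neg hne, if_neg hne]
        unfold bb; ring
  clear hO hA hB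
  refine Int.le_induction (motive := fun k _ => tt * C2 (k + 2 - (r + 1)) - B * C2 (k + 2 - O)
      - A * C2 (k + 2 - (O + 1)) = C2 (k + 2) - C2 (r + 2)
      - ∑ j ∈ Finset.Icc (1:ℤ) (k - r), max (r + j + 1 - j * tt) 0) ?_ ?_ k hk
  · -- base
    have e1 : r + 2 - (r+1) = 1 := by ring
    have e2 : Finset.Icc (1:ℤ) (r - r) = ∅ := by
      apply Finset.Icc_eq_empty; omega
    rw [e1, e2, C2_eq_zero (le_refl 1), Finset.sum_empty]
    rcases hfacts with ⟨h1, hO, hA, hB⟩ | ⟨ht2, m, hm0, hm1, hm2, hO, hA, hB⟩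
    · simp [hO, hA, hB]
    · have z1 : C2 (r + 2 - O) = 0 := C2_eq_zero (by omega)
      have z2 : C2 (r + 2 - (O + 1)) = 0 := C2_eq_zero (by omega)
      rw [z1, z2]; ring
  · -- step
    intro k hk' ihh
    -- rewrite all C2 at k+1 in terms of k
    have e1 : k + 1 + 2 - (r+1) = (k + 2 - (r+1)) + 1 := by ring
    have e2 : k + 1 + 2 - O = (k + 2 - O) + 1 := by ring
    have e3 : k + 1 + 2 - (O+1) = (k + 2 - (O+1)) + 1 := by ring
    have e4 : k + 1 + 2 = (k + 2) + 1 := by ring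
    rw [e1, e2, e3, e4, C2_succ, C2_succ, C2_succ, C2_succ]
    have e5 : k + 1 - r = (k - r) + 1 := by ring
    rw [e5, sum_Icc_top (by omega : (0:ℤ) ≤ k - r)]
    -- reduce to delta identity
    have delta : tt * max (k + 2 - (r+1)) 0 - B * max (k + 2 - O) 0
        - A * max (k + 2 - (O+1)) 0
        = max (k + 2) 0 - max (r + (k - r + 1) + 1 - (k - r + 1) * tt) 0 := by
      have hm1' : max (k + 2 - (r+1)) 0 = k + 1 - r := by
        rw [max_eq_left (by omega)]; ring
      have hk2 : max (k + 2) 0 = k + 2 := max_eq_left (by omega)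
      rcases hfacts with ⟨h1, hO, hA, hB⟩ | ⟨ht2, m, hm0, hmle, hmlt, hO, hA, hB⟩
      · subst h1
        have : r + (k - r + 1) + 1 - (k - r + 1) * 1 = r + 1 := by ring
        rw [this, hm1', hk2, hO, hA, hB, max_eq_left (by omega : (0:ℤ) ≤ r + 1)]
        ring
      · have hA1 : 1 ≤ A := by nlinarith
        have hAt : A ≤ tt - 1 := by nlinarith
        have hlast : r + (k - r + 1) + 1 - (k - r + 1) * tt
            = r + 1 - (k - r + 1) * (tt - 1) := by ring
        rw [hlast, hm1', hk2]
        set d : ℤ := k - r with hd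
        have hd0 : 0 ≤ d := by omega
        rcases lt_trichotomy d m with hcase | hcase | hcase
        · -- d + 1 ≤ m
          have hdm : d + 1 ≤ m := by omega
          have z1 : max (k + 2 - O) 0 = 0 := by
            rw [max_eq_right]; omega
          have z2 : max (k + 2 - (O+1)) 0 = 0 := by
            rw [max_eq_right]; omega
          have pos : 0 ≤ r + 1 - (d + 1) * (tt - 1) := by
            have : (d+1) * (tt-1) ≤ m * (tt-1) :=
              mul_le_mul_of_nonneg_right hdm (by omega)
            omega
          rw [z1, z2, max_eq_left pos]
          ring
        · -- d = m
          subst hcase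
          have z1 : max (k + 2 - O) 0 = 1 := by
            rw [max_eq_left (by omega)]; omega
          have z2 : max (k + 2 - (O+1)) 0 = 0 := by
            rw [max_eq_right]; omega
          have neg : r + 1 - (d + 1) * (tt - 1) ≤ 0 := by
            have : A - (tt - 1) = r + 1 - (d+1)*(tt-1) := by
              rw [hA]; ring
            omega
          rw [z1, z2, max_eq_right neg, hB]
          linear_combination hA
        · -- d > m
          have z1 : max (k + 2 - O) 0 = d + 1 - m := by
            rw [max_eq_left (by omega)]; omega
          have z2 : max (k + 2 - (O+1)) 0 = d - m := by
            rw [max_eq_left (by omega)]; omega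
          have neg : r + 1 - (d + 1) * (tt - 1) ≤ 0 := by
            have h5 : (m+1)*(tt-1) ≤ (d+1)*(tt-1) :=
              mul_le_mul_of_nonneg_right (by omega) (by omega)
            omega
          rw [z1, z2, max_eq_right neg, hB]
          linear_combination (d + 1 - m) * hA - (d - m) * hA
    linear_combination ihh + delta

theorem stmt_10 (r k : ℤ) (hr : 0 ≤ r) (hk : k ≥ r) (n : ℕ) (f1 : ℤ) (hf1 : 0 ≤ f1)
    (t : Fin n → ℤ) (ht : ∀ i, 1 ≤ t i)
    (Ω A B : Fin n → ℤ)
    (hΩ : ∀ i, Ω i = if t i = 1 then 0 else Omega (t i) r)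
    (hA : ∀ i, A i = if t i = 1 then 0 else aa (t i) r)
    (hB : ∀ i, B i = if t i = 1 then 0 else bb (t i) r) :
    C2 (k + 2) + f1 * C2 (k + 2 - (r + 1))
      - ∑ i : Fin n, (t i * C2 (k + 2 - (r + 1))
          - B i * C2 (k + 2 - Ω i)
          - A i * C2 (k + 2 - (Ω i + 1)))
    = C2 (k + 2) + f1 * C2 (k + 2 - (r + 1))
      - n * (C2 (k + 2) - C2 (r + 2))
      + ∑ i : Fin n, ∑ j ∈ Finset.Icc (1 : ℤ) (k - r), max (r + j + 1 - j * t i) 0 := by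
  have hkey : ∀ i : Fin n,
      t i * C2 (k + 2 - (r + 1)) - B i * C2 (k + 2 - Ω i) - A i * C2 (k + 2 - (Ω i + 1))
        = (C2 (k + 2) - C2 (r + 2))
          - ∑ j ∈ Finset.Icc (1:ℤ) (k - r), max (r + j + 1 - j * t i) 0 :=
    fun i => key r (t i) hr (ht i) k hk _ _ _ (hΩ i) (hA i) (hB i)
  rw [Finset.sum_congr rfl (fun i _ => hkey i), Finset.sum_sub_distrib,
    Finset.sum_const, Finset.card_univ, Fintype.card_fin, nsmul_eq_mul]
  ring
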